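/- Let K ⊆ ℝⁿ be a nonempty symmetric convex set with finite in-radius r_in. Then there exists a unit vector v ∈ S^{n−1} such that K ⊆ {x ∈ ℝⁿ : |v·x| ≤ r_in}. -/

import Mathlib

open MeasureTheory ProbabilityTheory Real

/-- The standard Gaussian measure `N(0,1)^n` on `Fin n → ℝ`. -/
noncomputable def stdGaussian (n : ℕ) : Measure (Fin n → ℝ) :=
  Measure.pi fun _ => gaussianReal 0 1

/-- The 0/1 indicator function of a set. -/
noncomputable def ind {n : ℕ} (K : Set (Fin n → ℝ)) (x : Fin n → ℝ) : ℝ :=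
  Set.indicator K (fun _ => (1:ℝ)) x

/-- The convex influence of direction `v` on `K`:
`Inf_v[K] = E_{x ∼ N(0,1)^n}[K(x) · (1 - (v·x)²)/√2]`. -/
noncomputable def convInf {n : ℕ} (K : Set (Fin n → ℝ)) (v : Fin n → ℝ) : ℝ :=
  ∫ x, ind K x * ((1 - (∑ i, v i * x i)^2) / Real.sqrt 2) ∂(stdGaussian n)

/-- Total convex influence, defined as the sum of coordinate influences. -/
noncomputable def convTInf {n : ℕ} (K : Set (Fin n → ℝ)) : ℝ :=
  ∑ i : Fin n, convInf K (fun j => if j = i then 1 else 0)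

/-- Total convex influence in integral form:
`TInf[K] = E_{x ∼ N(0,1)^n}[K(x) · (n - ‖x‖²)/√2]`. -/
noncomputable def convTInfI {n : ℕ} (K : Set (Fin n → ℝ)) : ℝ :=
  ∫ x, ind K x * (((n : ℝ) - ∑ i, (x i)^2) / Real.sqrt 2) ∂(stdGaussian n)

/-- Gaussian volume `γ(K)` under `N(0,1)^n`. -/
noncomputable def gvol {n : ℕ} (K : Set (Fin n → ℝ)) : ℝ :=
  (stdGaussian n K).toReal

/-- Variance of the indicator of `K` under the standard Gaussian: `γ(K)(1-γ(K))`. -/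
noncomputable def gvar {n : ℕ} (K : Set (Fin n → ℝ)) : ℝ :=
  gvol K * (1 - gvol K)

open Metric Filter

local notation "E" n => EuclideanSpace ℝ (Fin n)

theorem auxSlab (n : ℕ) (K : Set (EuclideanSpace ℝ (Fin n)))
    (h0 : (0 : EuclideanSpace ℝ (Fin n)) ∈ K)
    (hconv : Convex ℝ K) (hsym : ∀ x ∈ K, -x ∈ K)
    (rin : ℝ)
    (hfin : BddAbove {r : ℝ | 0 ≤ r ∧ closedBall (0 : EuclideanSpace ℝ (Fin n)) r ⊆ K})
    (hrin : rin = sSup {r : ℝ | 0 ≤ r ∧ closedBall (0 : EuclideanSpace ℝ (Fin n)) r ⊆ K}) :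
    ∃ v : EuclideanSpace ℝ (Fin n), ‖v‖ = 1 ∧
      ∀ x ∈ K, |(inner ℝ v x : ℝ)| ≤ rin := by
  have hrin0 : 0 ≤ rin := by
    rw [hrin]
    exact le_csSup hfin ⟨le_refl 0, by simp [Metric.closedBall_zero, h0]⟩
  -- Key claim: no ball of radius > rin fits in the closure of K
  have key : ∀ r : ℝ, rin < r → ¬ (closedBall (0 : EuclideanSpace ℝ (Fin n)) r ⊆ closure K) := by
    intro r hr hsub
    have hrpos : 0 < r := lt_of_le_of_lt hrin0 hr
    -- the affine span of K is everything
    have hclK : closure K ⊆ (affineSpan ℝ K : Set (EuclideanSpace ℝ (Fin n))) :=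
      closure_minimal (subset_affineSpan ℝ K) (affineSpan ℝ K).closed_of_finiteDimensional
    have hballspan : Metric.ball (0 : EuclideanSpace ℝ (Fin n)) r ⊆
        (affineSpan ℝ K : Set (EuclideanSpace ℝ (Fin n))) :=
      fun z hz => hclK (hsub (ball_subset_closedBall hz))
    have htop : affineSpan ℝ K = ⊤ := by
      refine top_unique ?_
      rw [← Metric.isOpen_ball.affineSpan_eq_top (Metric.nonempty_ball.mpr hrpos)]
      exact affineSpan_le.mpr hballspan
    obtain ⟨u, hu⟩ := hconv.interior_nonempty_iff_affineSpan_eq_top.mpr htop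
    set r' := (rin + r) / 2 with hr'def
    have hr'1 : rin < r' := by simp only [hr'def]; linarith
    have hr'2 : r' < r := by simp only [hr'def]; linarith
    have hr'0 : 0 ≤ r' := le_of_lt (lt_of_le_of_lt hrin0 hr'1)
    have hsub' : closedBall (0 : EuclideanSpace ℝ (Fin n)) r' ⊆ K := by
      intro x hx
      rw [mem_closedBall_zero_iff] at hx
      set t := (r - r') / (r' + ‖u‖ + 1) with htdef
      have ht : 0 < t := by
        apply div_pos (by linarith) (by positivity)
      have htmul : t * (r' + ‖u‖ + 1) = r - r' := by
        rw [htdef]; field_simp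
      have hc : (1 : ℝ) + t ≠ 0 := by positivity
      set y := (1 + t) • x - t • u with hydef
      have hy : ‖y‖ ≤ r := by
        have h1 : ‖y‖ ≤ (1 + t) * ‖x‖ + t * ‖u‖ := by
          refine (norm_sub_le _ _).trans ?_
          rw [norm_smul, norm_smul, Real.norm_eq_abs, Real.norm_eq_abs,
            abs_of_pos (by positivity : (0:ℝ) < 1 + t), abs_of_pos ht]
        have h2 : (1 + t) * ‖x‖ ≤ (1 + t) * r' := by
          apply mul_le_mul_of_nonneg_left hx (by positivity)
        nlinarith [norm_nonneg u, ht.le]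
      have hyc : y ∈ closure K := hsub (mem_closedBall_zero_iff.mpr hy)
      have hcomb : (t / (1 + t)) • u + (1 / (1 + t)) • y = x := by
        rw [hydef]
        match_scalars <;> field_simp <;> ring
      have hx' : x ∈ interior K := by
        rw [← hcomb]
        exact hconv.combo_interior_closure_mem_interior hu hyc
          (div_pos ht (by positivity)) (by positivity)
          (by field_simp; ring)
      exact interior_subset hx'
    have : r' ≤ rin := by
      rw [hrin]; exact le_csSup hfin ⟨hr'0, hsub'⟩
    linarith
  -- for every k, a separating unit vector with slack 1/(k+1)
  have hex : ∀ k : ℕ, ∃ v : EuclideanSpace ℝ (Fin n), ‖v‖ = 1 ∧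
      ∀ c ∈ K, |(inner ℝ v c : ℝ)| ≤ rin + 1 / (k + 1) := by
    intro k
    have hrk : rin < rin + 1 / (k + 1 : ℝ) := lt_add_of_pos_right _ (by positivity)
    obtain ⟨x, hxball, hxnot⟩ := Set.not_subset.mp (key _ hrk)
    obtain ⟨f, s, hfs, hsx⟩ :=
      geometric_hahn_banach_closed_point hconv.closure isClosed_closure hxnot
    set w := (InnerProductSpace.toDual ℝ (EuclideanSpace ℝ (Fin n))).symm f with hwdef
    have hfw : ∀ z, (inner ℝ w z : ℝ) = f z := fun z => InnerProductSpace.toDual_symm_apply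
    have hs0 : 0 < s := by
      have := hfs 0 (subset_closure h0)
      rwa [map_zero] at this
    have hwne : w ≠ 0 := by
      intro hw0
      have : f x = 0 := by rw [← hfw x, hw0, inner_zero_left]
      linarith
    have hwnorm : (0:ℝ) < ‖w‖ := norm_pos_iff.mpr hwne
    refine ⟨‖w‖⁻¹ • w, ?_, fun c hc => ?_⟩
    · rw [norm_smul, norm_inv, norm_norm, inv_mul_cancel₀ hwnorm.ne']
    · have h1 : (inner ℝ w c : ℝ) < s := by rw [hfw]; exact hfs c (subset_closure hc)
      have h2 : -(inner ℝ w c : ℝ) < s := by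
        rw [← inner_neg_right, hfw]
        exact hfs (-c) (subset_closure (hsym c hc))
      have habs : |(inner ℝ w c : ℝ)| < s := abs_lt.mpr ⟨by linarith, h1⟩
      have h3 : s < ‖w‖ * (rin + 1 / (k + 1)) := by
        calc s < f x := hsx
          _ = (inner ℝ w x : ℝ) := (hfw x).symm
          _ ≤ ‖w‖ * ‖x‖ := real_inner_le_norm w x
          _ ≤ ‖w‖ * (rin + 1 / (k + 1)) := by
              apply mul_le_mul_of_nonneg_left (mem_closedBall_zero_iff.mp hxball) hwnorm.le
      rw [real_inner_smul_left, abs_mul, abs_of_pos (inv_pos.mpr hwnorm)]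
      calc ‖w‖⁻¹ * |(inner ℝ w c : ℝ)| ≤ ‖w‖⁻¹ * (‖w‖ * (rin + 1 / (k + 1))) := by
            apply mul_le_mul_of_nonneg_left (by linarith) (inv_pos.mpr hwnorm).le
        _ = rin + 1 / (k + 1) := by field_simp
  choose v hv1 hv2 using hex
  have hsph : ∀ k, v k ∈ sphere (0 : EuclideanSpace ℝ (Fin n)) 1 :=
    fun k => mem_sphere_zero_iff_norm.mpr (hv1 k)
  obtain ⟨z, hz, φ, hφ, hconv'⟩ := (isCompact_sphere (0 : EuclideanSpace ℝ (Fin n)) 1).tendsto_subseq hsph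
  refine ⟨z, mem_sphere_zero_iff_norm.mp hz, fun c hc => ?_⟩
  have hlim1 : Tendsto (fun k => |(inner ℝ (v (φ k)) c : ℝ)|) atTop (nhds |(inner ℝ z c : ℝ)|) :=
    (hconv'.inner tendsto_const_nhds).abs
  have hlim2 : Tendsto (fun k => rin + 1 / ((φ k : ℝ) + 1)) atTop (nhds (rin + 0)) :=
    tendsto_const_nhds.add (tendsto_one_div_add_atTop_nhds_zero_nat.comp hφ.tendsto_atTop)
  rw [add_zero] at hlim2
  exact le_of_tendsto_of_tendsto' hlim1 hlim2 (fun k => hv2 (φ k) c hc)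

/-- A nonempty symmetric convex set with finite in-radius `r_in` is contained in
a symmetric slab of half-width `r_in`. -/
theorem stmt12 (n : ℕ) (hn : 0 < n) (K : Set (Fin n → ℝ)) (hne : K.Nonempty)
    (hconv : Convex ℝ K) (hsym : ∀ x ∈ K, -x ∈ K)
    (rin : ℝ)
    (hfin : BddAbove {r : ℝ | 0 ≤ r ∧ {x : Fin n → ℝ | ∑ i, (x i) ^ 2 ≤ r ^ 2} ⊆ K})
    (hrin : rin = sSup {r : ℝ | 0 ≤ r ∧ {x : Fin n → ℝ | ∑ i, (x i) ^ 2 ≤ r ^ 2} ⊆ K}) :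
    ∃ v : Fin n → ℝ, ∑ i, (v i) ^ 2 = 1 ∧ K ⊆ {x | |∑ i, v i * x i| ≤ rin} := by
  have h0K : (0 : Fin n → ℝ) ∈ K := by
    obtain ⟨x, hx⟩ := hne
    have := hconv hx (hsym x hx) (by norm_num : (0:ℝ) ≤ 1/2) (by norm_num : (0:ℝ) ≤ 1/2)
      (by norm_num)
    simpa using this
  let K' : Set (EuclideanSpace ℝ (Fin n)) := (fun x => x.ofLp) ⁻¹' K
  have hnormsq : ∀ x : EuclideanSpace ℝ (Fin n), ‖x‖ ^ 2 = ∑ i, x i ^ 2 := by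
    intro x
    rw [EuclideanSpace.norm_eq, Real.sq_sqrt (by positivity)]
    simp [sq_abs]
  have hball : ∀ r : ℝ, 0 ≤ r →
      (fun x : EuclideanSpace ℝ (Fin n) => x.ofLp) ⁻¹' {x : Fin n → ℝ | ∑ i, (x i) ^ 2 ≤ r ^ 2} =
        (closedBall (0 : EuclideanSpace ℝ (Fin n)) r : Set (EuclideanSpace ℝ (Fin n))) := by
    intro r hr
    ext x
    refine Iff.trans ?_ (mem_closedBall_zero_iff (a := (show EuclideanSpace ℝ (Fin n) from x))).symm
    rw [Set.mem_preimage, Set.mem_setOf_eq, ← hnormsq x]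
    exact (pow_le_pow_iff_left₀ (norm_nonneg _) hr two_ne_zero)
  have hseteq : {r : ℝ | 0 ≤ r ∧ {x : Fin n → ℝ | ∑ i, (x i) ^ 2 ≤ r ^ 2} ⊆ K} =
      {r : ℝ | 0 ≤ r ∧ closedBall (0 : EuclideanSpace ℝ (Fin n)) r ⊆ K'} := by
    ext r
    exact and_congr_right fun hr => by
      rw [← hball r hr]
      constructor
      · intro h x hx
        exact h hx
      · intro h x hx
        have := h (a := WithLp.toLp 2 x) (by simpa using hx)
        simpa [K'] using this
  obtain ⟨v, hv1, hv2⟩ := auxSlab n K' (by simpa [K'] using h0K)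
    (hconv.linear_preimage (WithLp.linearEquiv 2 ℝ (Fin n → ℝ)).toLinearMap)
    (fun x hx => by simpa [K'] using hsym _ hx) rin
    (hseteq ▸ hfin) (hseteq ▸ hrin)
  have hinner : ∀ x : EuclideanSpace ℝ (Fin n), (inner ℝ v x : ℝ) = ∑ i, v i * x i := by
    intro x
    simp [PiLp.inner_apply, RCLike.inner_apply, conj_trivial, mul_comm]
  refine ⟨v.ofLp, ?_, fun x hx => ?_⟩
  · rw [← hnormsq v, hv1, one_pow]
  · have := hv2 (WithLp.toLp 2 x) (by simpa [K'] using hx)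
    rw [hinner] at this
    simpa using this
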